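/- arXiv:0804.4517 — 6 statements merged into one kernel-verified Lean document; each statement's English description precedes it below -/
import Mathlib

section
/- Let A and B be n×n real positive definite matrices. Then the 2n×2n block matrix [[A∘B, Diag(A)], [Diag(A), A∘B⁻¹]] is positive semidefinite, where ∘ denotes the Hadamard (entrywise) product and Diag(A) = A∘I is the diagonal matrix whose diagonal entries are those of A. -/
open Matrix

/-- Real Schur product theorem. -/
lemma hadamard_posSemidef' {ι : Type*} [Fintype ι] [DecidableEq ι]
    {A B : Matrix ι ι ℝ} (hA : A.PosSemidef) (hB : B.PosSemidef) :
    (A.hadamard B).PosSemidef := by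
  exact hA.hadamard hB

/-- For `n × n` real positive definite matrices `A` and `B`, the block matrix
`[[A∘B, Diag(A)], [Diag(A), A∘B⁻¹]]` is positive semidefinite, where `∘` is the
Hadamard product and `Diag(A) = A∘I`. -/
theorem fromBlocks_hadamard_diag_posSemidef {n : ℕ} (A B : Matrix (Fin n) (Fin n) ℝ)
    (hA : A.PosDef) (hB : B.PosDef) :
    (Matrix.fromBlocks (A.hadamard B) (A.hadamard 1)
      (A.hadamard 1) (A.hadamard B⁻¹)).PosSemidef := by
  have h1 : (fromBlocks A A A A).PosSemidef := by
    have h := hA.posSemidef.mul_mul_conjTranspose_same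
      (fromRows (1 : Matrix (Fin n) (Fin n) ℝ) (1 : Matrix (Fin n) (Fin n) ℝ))
    rwa [fromRows_mul, one_mul, conjTranspose_fromRows_eq_fromCols_conjTranspose,
      conjTranspose_one, fromRows_mul_fromCols, mul_one] at h
  have h2 : (fromBlocks B 1 1 B⁻¹).PosSemidef := by
    open scoped MatrixOrder in set S := CFC.sqrt B with hSdef
    have hSmul : S * S = B := by
      open scoped MatrixOrder in exact CFC.sqrt_mul_sqrt_self B hB.posSemidef.nonneg
    have hSH : Sᴴ = S := by open scoped MatrixOrder in exact (CFC.sqrt_nonneg B).posSemidef.1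
    have hdet : IsUnit S.det := by
      have : S.det * S.det = B.det := by rw [← det_mul, hSmul]
      have hBdet : B.det ≠ 0 := ne_of_gt hB.det_pos
      exact isUnit_iff_ne_zero.mpr (fun h => hBdet (by rw [← this, h, mul_zero]))
    have h := posSemidef_conjTranspose_mul_self (fromCols S S⁻¹)
    rwa [conjTranspose_fromCols_eq_fromRows_conjTranspose, fromRows_mul_fromCols,
      hSH, conjTranspose_nonsing_inv, hSH, mul_nonsing_inv _ hdet, nonsing_inv_mul _ hdet,
      hSmul, ← Matrix.mul_inv_rev, hSmul] at h
  have heq : fromBlocks (A.hadamard B) (A.hadamard 1) (A.hadamard 1) (A.hadamard B⁻¹)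
      = (fromBlocks A A A A).hadamard (fromBlocks B 1 1 B⁻¹) := by
    ext (i | i) (j | j) <;> rfl
  rw [heq]
  exact hadamard_posSemidef' h1 h2
end

section
/- Let A and B be n×n real positive definite matrices. Then A∘B⁻¹ − Diag(A)(A∘B)⁻¹Diag(A) is positive semidefinite, i.e., A∘B⁻¹ ≥ Diag(A)(A∘B)⁻¹Diag(A) in the Loewner order. (Here A∘B is positive definite, hence invertible, by the Schur product theorem.) -/
open Matrix

theorem Matrix.posSemidef_iff_eq_transpose_mul_self {m : Type*} [Fintype m] [DecidableEq m]
    {A : Matrix m m ℝ} : A.PosSemidef ↔ ∃ B : Matrix m m ℝ, A = Bᴴ * B := by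
  open scoped MatrixOrder in
  refine ⟨fun hA => ?_, fun ⟨B, hB⟩ => hB ▸ posSemidef_conjTranspose_mul_self B⟩
  obtain ⟨X, hX, -, hXA⟩ :=
    CFC.exists_sqrt_of_isSelfAdjoint_of_quasispectrumRestricts hA.isHermitian
      (QuasispectrumRestricts.nnreal_of_nonneg hA.nonneg)
  exact ⟨X, by rw [← star_eq_conjTranspose, hX.star_eq, hXA]⟩

private lemma quad_hadamard {m : Type*} [Fintype m] (M C : Matrix m m ℝ) (x : m → ℝ) :
    x ⬝ᵥ ((M.hadamard (Cᴴ * C)) *ᵥ x)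
      = ∑ l, (fun i => x i * C l i) ⬝ᵥ (M *ᵥ fun i => x i * C l i) := by
  simp only [dotProduct, mulVec, hadamard_apply, Matrix.mul_apply, conjTranspose_apply,
    RCLike.star_def, Finset.mul_sum, Finset.sum_mul]
  conv_rhs => rw [Finset.sum_comm]
  refine Finset.sum_congr rfl fun a _ => ?_
  rw [Finset.sum_comm]
  refine Finset.sum_congr rfl fun l _ => ?_
  refine Finset.sum_congr rfl fun b _ => ?_
  simp only [starRingEnd_apply, star_trivial]
  ring

private lemma hadamard_isHermitian {m : Type*} [Fintype m] [DecidableEq m] {M N : Matrix m m ℝ}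
    (hM : M.IsHermitian) (hN : N.IsHermitian) : (M.hadamard N).IsHermitian := by
  ext i j
  simp only [conjTranspose_apply, hadamard_apply, star_mul', RCLike.star_def]
  rw [← hM.apply, ← hN.apply]
  simp [starRingEnd_apply, mul_comm]

private lemma hadamard_posSemidef {m : Type*} [Fintype m] [DecidableEq m] {M N : Matrix m m ℝ}
    (hM : M.PosSemidef) (hN : N.PosSemidef) : (M.hadamard N).PosSemidef := by
  obtain ⟨C, rfl⟩ := posSemidef_iff_eq_transpose_mul_self.mp hN
  refine .of_dotProduct_mulVec_nonneg (hadamard_isHermitian hM.1 (posSemidef_conjTranspose_mul_self C).1) fun x => ?_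
  have : (star x) = x := by ext i; simp
  rw [this, quad_hadamard]
  refine Finset.sum_nonneg fun l _ => ?_
  have := hM.dotProduct_mulVec_nonneg (fun i => x i * C l i)
  simpa using this

private lemma hadamard_posDef {m : Type*} [Fintype m] [DecidableEq m] {M N : Matrix m m ℝ}
    (hM : M.PosDef) (hN : N.PosDef) : (M.hadamard N).PosDef := by
  obtain ⟨C, hC⟩ := posSemidef_iff_eq_transpose_mul_self.mp hN.posSemidef
  subst hC
  refine .of_dotProduct_mulVec_pos (hadamard_isHermitian hM.1 (posSemidef_conjTranspose_mul_self C).1) fun x hx => ?_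
  have hst : (star x) = x := by ext i; simp
  rw [hst, quad_hadamard]
  -- find i with x i ≠ 0
  obtain ⟨i, hi⟩ := Function.ne_iff.mp hx
  have hdiag : 0 < (Cᴴ * C) i i := by
    have := hN.dotProduct_mulVec_pos (x := Pi.single i 1) (by
      intro h
      have := congrFun h i
      simp at this)
    simpa [dotProduct, mulVec, Pi.single_apply, Finset.mul_sum] using this
  have hdiag' : 0 < ∑ l, C l i * C l i := by
    simpa [Matrix.mul_apply, conjTranspose_apply] using hdiag
  have hl : ∃ l, C l i ≠ 0 := by
    by_contra h
    push_neg at h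
    simp [h] at hdiag'
  obtain ⟨l, hl⟩ := hl
  refine Finset.sum_pos' (fun k _ => by simpa using hM.posSemidef.dotProduct_mulVec_nonneg (fun j => x j * C k j))
    ⟨l, Finset.mem_univ l, ?_⟩
  have hy : (fun j => x j * C l j) ≠ 0 := by
    intro h
    have := congrFun h i
    simp only [Pi.zero_apply] at this
    exact hi (by rcases mul_eq_zero.mp this with h' | h' <;> [exact h'; exact absurd h' hl])
  have := hM.dotProduct_mulVec_pos hy
  simpa using this

/-- For `n × n` real positive definite matrices `A` and `B`,
`A∘B⁻¹ ≥ Diag(A) (A∘B)⁻¹ Diag(A)` in the Loewner order, where `∘` is the Hadamard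
product and `Diag(A) = A∘I`. -/
theorem hadamard_inv_ge_diag_inv_diag {n : ℕ} (A B : Matrix (Fin n) (Fin n) ℝ)
    (hA : A.PosDef) (hB : B.PosDef) :
    (A.hadamard B⁻¹ - (A.hadamard 1) * (A.hadamard B)⁻¹ * (A.hadamard 1)).PosSemidef := by
  have hAB : (A.hadamard B).PosDef := hadamard_posDef hA hB
  haveI : Invertible B := hB.isUnit.invertible
  haveI : Invertible (A.hadamard B) := hAB.isUnit.invertible
  have hDiagH : (A.hadamard 1)ᴴ = A.hadamard 1 :=
    hadamard_isHermitian hA.1 isHermitian_one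
  -- block matrix [[B, 1],[1, B⁻¹]] is PSD
  have h1 : (fromBlocks B 1 (1 : Matrix (Fin n) (Fin n) ℝ)ᴴ B⁻¹).PosSemidef := by
    rw [PosDef.fromBlocks₁₁ _ _ hB]
    have : B⁻¹ - (1 : Matrix (Fin n) (Fin n) ℝ)ᴴ * B⁻¹ * 1 = 0 := by simp
    rw [this]
    exact PosSemidef.zero
  -- block matrix [[A, A],[A, A]] is PSD
  have h2 : (fromBlocks A A A A).PosSemidef := by
    have : fromBlocks A A A A
        = A.submatrix (Sum.elim id id) (Sum.elim id id) := by
      ext (i | i) (j | j) <;> simp [fromBlocks]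
    rw [this]
    exact hA.posSemidef.submatrix _
  have hblocks : (fromBlocks (A.hadamard B) (A.hadamard 1) (A.hadamard 1)ᴴ
      (A.hadamard B⁻¹)).PosSemidef := by
    have heq : fromBlocks (A.hadamard B) (A.hadamard 1) (A.hadamard 1)ᴴ (A.hadamard B⁻¹)
        = (fromBlocks A A A A).hadamard (fromBlocks B 1 (1 : Matrix (Fin n) (Fin n) ℝ)ᴴ B⁻¹) := by
      rw [hDiagH]
      ext (i | i) (j | j) <;> simp [fromBlocks, hadamard_apply]
    rw [heq]
    exact hadamard_posSemidef h2 h1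
  have := (PosDef.fromBlocks₁₁ (A.hadamard 1) (A.hadamard B⁻¹) hAB).mp hblocks
  rwa [hDiagH] at this
end

section
/- Let A be an n×n real positive definite matrix, and let diag(A) denote the column vector in ℝⁿ whose i-th entry is Aᵢᵢ. Then diag(A)ᵀ (A∘A)⁻¹ diag(A) ≤ n, where ∘ denotes the Hadamard (entrywise) product and (A∘A)⁻¹ is the inverse of A∘A (which is positive definite by the Schur product theorem). -/
open Matrix

/-- For an `n × n` real positive definite matrix `A`,
`diag(A)ᵀ (A∘A)⁻¹ diag(A) ≤ n`, where `diag(A)` is the vector of diagonal entries of `A`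
and `∘` is the Hadamard product. -/
theorem diag_dotProduct_hadamard_inv_le {n : ℕ} (A : Matrix (Fin n) (Fin n) ℝ)
    (hA : A.PosDef) :
    A.diag ⬝ᵥ ((A.hadamard A)⁻¹ *ᵥ A.diag) ≤ (n : ℝ) := by
  set B := A.hadamard A with hB
  by_cases hdet : IsUnit B.det
  · set v := A.diag with hv
    set w := B⁻¹ *ᵥ v with hw
    have hBw : B *ᵥ w = v := by
      rw [hw, mulVec_mulVec, Matrix.mul_nonsing_inv _ hdet, one_mulVec]
    open scoped MatrixOrder in
    set s := CFC.sqrt A with hs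
    open scoped MatrixOrder in
    have hss : s * s = A := CFC.sqrt_mul_sqrt_self A hA.posSemidef.nonneg
    open scoped MatrixOrder in
    have hsherm : s.conjTranspose = s := (CFC.sqrt_nonneg A).posSemidef.1
    clear_value s w
    clear hs hw
    set D : Matrix (Fin n) (Fin n) ℝ := diagonal w with hD
    set S := s * D * s with hS
    clear_value D S
    -- S is symmetric
    have hSsym : ∀ i j, S j i = S i j := by
      intro i j
      have hh : S.conjTranspose = S := by
        rw [hS, conjTranspose_mul, conjTranspose_mul, hsherm, hD,
          (isHermitian_diagonal w : (diagonal w).conjTranspose = diagonal w),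
          Matrix.mul_assoc]
      calc S j i = S.conjTranspose i j := by simp [conjTranspose_apply]
        _ = S i j := by rw [hh]
    have hASym : ∀ i j, A j i = A i j := fun i j => by
      have := hA.1.apply j i
      simpa using this.symm
    -- trace S = v ⬝ᵥ w
    have htrS : S.trace = v ⬝ᵥ w := by
      have h1 : S.trace = (A * D).trace := by
        rw [hS, trace_mul_cycle, hss]
      rw [h1]
      simp only [Matrix.trace, Matrix.diag, dotProduct, hD, hv]
      refine Finset.sum_congr rfl fun i _ => ?_
      rw [mul_diagonal]
    -- auxiliary: entries of D * A
    have hDA : ∀ i j, (D * A) i j = w i * A i j := fun i j => by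
      rw [hD, diagonal_mul]
    -- v ⬝ᵥ w = trace (S * S)
    have htrSS : v ⬝ᵥ w = (S * S).trace := by
      have h1 : S * S = s * (D * A * D * s) := by
        rw [hS, ← hss]
        simp only [Matrix.mul_assoc]
      have h2 : (S * S).trace = (D * A * (D * A)).trace := by
        rw [h1, trace_mul_comm]
        congr 1
        simp only [Matrix.mul_assoc, hss]
      have lhs_eq : v ⬝ᵥ w = ∑ i, ∑ j, (A i j * A i j) * (w j * w i) := by
        rw [← hBw]
        simp only [dotProduct, mulVec, hB, hadamard_apply]
        refine Finset.sum_congr rfl fun i _ => ?_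
        rw [Finset.sum_mul]
        exact Finset.sum_congr rfl fun j _ => by ring
      have rhs_eq : (D * A * (D * A)).trace = ∑ i, ∑ j, (A i j * A j i) * (w i * w j) := by
        simp only [Matrix.trace, Matrix.diag]
        refine Finset.sum_congr rfl fun i _ => ?_
        rw [Matrix.mul_apply]
        refine Finset.sum_congr rfl fun j _ => ?_
        rw [hDA, hDA]; ring
      rw [lhs_eq, h2, rhs_eq]
      refine Finset.sum_congr rfl fun i _ => Finset.sum_congr rfl fun j _ => ?_
      rw [hASym i j]; ring
    set t := v ⬝ᵥ w with ht
    have hsq : (S * S).trace = ∑ i, ∑ j, (S i j) ^ 2 := by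
      simp only [Matrix.trace, Matrix.diag]
      refine Finset.sum_congr rfl fun i _ => ?_
      rw [Matrix.mul_apply]
      refine Finset.sum_congr rfl fun j _ => ?_
      rw [hSsym i j]; ring
    have ht0 : 0 ≤ t := by
      rw [htrSS, hsq]
      positivity
    have hkey : t ^ 2 ≤ (n : ℝ) * t := by
      have e1 : t = ∑ i, S i i := by rw [← htrS]; rfl
      have e2 : t = ∑ i, ∑ j, (S i j) ^ 2 := by rw [htrSS, hsq]
      calc t ^ 2 = (∑ i, S i i) ^ 2 := by rw [e1]
        _ ≤ (Finset.univ : Finset (Fin n)).card * ∑ i, (S i i) ^ 2 :=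
            sq_sum_le_card_mul_sum_sq
        _ ≤ (n : ℝ) * ∑ i, ∑ j, (S i j) ^ 2 := by
            rw [Finset.card_univ, Fintype.card_fin]
            refine mul_le_mul_of_nonneg_left ?_ (by positivity)
            refine Finset.sum_le_sum fun i _ => ?_
            exact Finset.single_le_sum (fun j _ => sq_nonneg (S i j)) (Finset.mem_univ i)
        _ = (n : ℝ) * t := by rw [← e2]
    rcases eq_or_lt_of_le ht0 with h | h
    · rw [← h]; positivity
    · exact (mul_le_mul_iff_of_pos_right h).mp (by rw [← sq]; exact hkey)
  · rw [nonsing_inv_apply_not_isUnit _ hdet]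
    simp
end

section
/- Let A be an n×n real positive definite matrix. Then the (n+1)×(n+1) block matrix [[A∘A, diag(A)], [diag(A)ᵀ, n]] is positive semidefinite, where A∘A is the Hadamard square of A, diag(A) is the column vector in ℝⁿ whose i-th entry is Aᵢᵢ, and the bottom-right block is the 1×1 matrix with entry n. -/
open Matrix

private lemma hadamard_block_swap4 {n : ℕ} (F : Fin n → Fin n → Fin n → Fin n → ℝ) :
    (∑ i, ∑ j, ∑ k, ∑ l, F i j k l) = ∑ k, ∑ l, ∑ i, ∑ j, F i j k l := by
  simp_rw [← Fintype.sum_prod_type']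
  exact Fintype.sum_equiv
    ⟨fun x => (x.2.2.1, x.2.2.2, x.1, x.2.1), fun x => (x.2.2.1, x.2.2.2, x.1, x.2.1),
      fun x => rfl, fun x => rfl⟩ _ _ (fun x => rfl)

private lemma hadamard_block_aux {n : ℕ} (lam : Fin n → ℝ) (hlam : ∀ k, 0 ≤ lam k)
    (v : Fin n → Fin n → ℝ) (x : Fin n → ℝ) (t : ℝ) :
    0 ≤ ∑ i, x i * (∑ j, (∑ k, lam k * v k i * v k j) * (∑ k, lam k * v k i * v k j) * x j
            + (∑ k, lam k * v k i * v k i) * t)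
        + t * (∑ i, (∑ k, lam k * v k i * v k i) * x i + n * t) := by
  set c : Fin n → Fin n → ℝ := fun k l => ∑ i, v k i * v l i * x i with hc
  have P1 : (∑ i, ∑ j, x i * ((∑ k, lam k * v k i * v k j) * (∑ k, lam k * v k i * v k j) * x j))
      = ∑ k, ∑ l, lam k * lam l * c k l ^ 2 := by
    have e1 : ∀ i j : Fin n, x i * ((∑ k, lam k * v k i * v k j) * (∑ k, lam k * v k i * v k j) * x j)
        = ∑ k, ∑ l, (lam k * lam l) * ((v k i * v l i * x i) * (v k j * v l j * x j)) := by
      intro i j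
      rw [Finset.sum_mul_sum]
      simp only [Finset.mul_sum, Finset.sum_mul]
      exact Finset.sum_congr rfl fun k _ => Finset.sum_congr rfl fun l _ => by ring
    have e2 : ∀ k l : Fin n, lam k * lam l * c k l ^ 2
        = ∑ i, ∑ j, (lam k * lam l) * ((v k i * v l i * x i) * (v k j * v l j * x j)) := by
      intro k l
      rw [hc]
      simp only [sq, Finset.sum_mul_sum, Finset.mul_sum, Finset.sum_mul]
      exact Finset.sum_congr rfl fun i _ => Finset.sum_congr rfl fun j _ => by ring
    simp_rw [e1, e2]
    exact hadamard_block_swap4 _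
  have P2 : (∑ i, x i * (∑ k, lam k * v k i * v k i)) = ∑ k, lam k * c k k := by
    simp_rw [Finset.mul_sum]
    rw [Finset.sum_comm]
    refine Finset.sum_congr rfl fun k _ => ?_
    rw [hc, Finset.mul_sum]
    exact Finset.sum_congr rfl fun i _ => by ring
  have expand : ∑ i, x i * (∑ j, (∑ k, lam k * v k i * v k j) * (∑ k, lam k * v k i * v k j) * x j
            + (∑ k, lam k * v k i * v k i) * t)
        + t * (∑ i, (∑ k, lam k * v k i * v k i) * x i + n * t)
      = (∑ i, ∑ j, x i * ((∑ k, lam k * v k i * v k j) * (∑ k, lam k * v k i * v k j) * x j))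
        + 2 * (∑ i, x i * (∑ k, lam k * v k i * v k i)) * t + n * t ^ 2 := by
    simp only [mul_add, Finset.mul_sum, Finset.sum_add_distrib, Finset.sum_mul]
    ring_nf
    rw [add_assoc, ← Finset.sum_add_distrib]
    congr 1
    refine Finset.sum_congr rfl fun i _ => ?_
    rw [← Finset.sum_add_distrib]
    exact Finset.sum_congr rfl fun k _ => by ring
  rw [expand, P1, P2]
  have final : (∑ k, ∑ l, lam k * lam l * c k l ^ 2) + 2 * (∑ k, lam k * c k k) * t + n * t ^ 2
      = ∑ k, ∑ l, (if k = l then (lam k * c k k + t) ^ 2 else lam k * lam l * c k l ^ 2) := by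
    have step : ∀ k l : Fin n, (if k = l then (lam k * c k k + t) ^ 2 else lam k * lam l * c k l ^ 2)
        = lam k * lam l * c k l ^ 2 + (if k = l then 2 * t * (lam k * c k k) + t ^ 2 else 0) := by
      intro k l
      by_cases h : k = l
      · subst h; rw [if_pos rfl, if_pos rfl]; ring
      · rw [if_neg h, if_neg h, add_zero]
    simp_rw [step, Finset.sum_add_distrib, Finset.sum_ite_eq, Finset.mem_univ, if_true]
    rw [Finset.sum_add_distrib, Finset.sum_const, Finset.card_univ, Fintype.card_fin,
      nsmul_eq_mul, ← Finset.mul_sum]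
    ring
  rw [final]
  refine Finset.sum_nonneg fun k _ => Finset.sum_nonneg fun l _ => ?_
  split
  · positivity
  · have h1 := hlam k; have h2 := hlam l; positivity

/-- For an `n × n` real positive definite matrix `A`, the `(n+1) × (n+1)` block matrix
`[[A∘A, diag(A)], [diag(A)ᵀ, n]]` is positive semidefinite, where `A∘A` is the Hadamard
square and `diag(A)` is the column vector of diagonal entries of `A`. -/
theorem fromBlocks_hadamard_sq_diag_n_posSemidef {n : ℕ} (A : Matrix (Fin n) (Fin n) ℝ)
    (hA : A.PosDef) :
    (Matrix.fromBlocks (A.hadamard A)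
      (Matrix.of fun i (_ : Unit) => A.diag i)
      (Matrix.of fun (_ : Unit) j => A.diag j)
      (Matrix.of fun (_ : Unit) (_ : Unit) => (n : ℝ))).PosSemidef := by
  have hH := hA.isHermitian
  have hsymm : ∀ i j, A j i = A i j := by
    intro i j
    conv_lhs => rw [← hH]
    simp [Matrix.conjTranspose_apply]
  rw [posSemidef_iff_dotProduct_mulVec]
  constructor
  · ext (i | i) (j | j) <;>
      simp [Matrix.conjTranspose_apply, Matrix.hadamard, Matrix.diag, hsymm,
       mul_comm]
  · intro z
    simp only [star, RCLike.re_to_real, dotProduct, mulVec, Fintype.sum_sum_type,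
      fromBlocks_apply₁₁, fromBlocks_apply₁₂, fromBlocks_apply₂₁, fromBlocks_apply₂₂,
      Matrix.hadamard, Matrix.diag, of_apply, Finset.univ_unique, Finset.sum_singleton, id]
    have hrep : ∀ i j, A i j = ∑ k, hH.eigenvalues k *
        (hH.eigenvectorUnitary : Matrix (Fin n) (Fin n) ℝ) i k *
        (hH.eigenvectorUnitary : Matrix (Fin n) (Fin n) ℝ) j k := by
      intro i j
      conv_lhs => rw [hH.spectral_theorem]
      simp [Matrix.mul_apply, Matrix.diagonal_apply, star, Matrix.conjTranspose_apply,
        Finset.sum_mul, mul_comm, mul_assoc, mul_left_comm]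
    simp_rw [hrep]
    exact hadamard_block_aux hH.eigenvalues (fun k => (hA.posSemidef.eigenvalues_nonneg k))
      (fun k i => (hH.eigenvectorUnitary : Matrix (Fin n) (Fin n) ℝ) i k)
      (fun i => z (Sum.inl i)) (z (Sum.inr default))
end

section
/- Let A be an n×n real positive semidefinite matrix with n ≥ 1. Then A∘A − (1/n)·diag(A)diag(A)ᵀ is positive semidefinite, i.e., A∘A ≥ diag(A)diag(A)ᵀ/n in the Loewner order, where A∘A is the Hadamard square of A and diag(A)diag(A)ᵀ is the rank-one matrix with (i,j) entry AᵢᵢAⱼⱼ. -/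
open Matrix
open scoped MatrixOrder

/-- For an `n × n` real positive semidefinite matrix `A` with `n ≥ 1`,
`A∘A ≥ diag(A)diag(A)ᵀ / n` in the Loewner order, where `A∘A` is the Hadamard square and
`diag(A)diag(A)ᵀ` is the rank-one matrix with `(i,j)` entry `Aᵢᵢ Aⱼⱼ`. -/
theorem hadamard_sq_ge_diag_vecMulVec {n : ℕ} (hn : 1 ≤ n) (A : Matrix (Fin n) (Fin n) ℝ)
    (hA : A.PosSemidef) :
    (A.hadamard A - (n : ℝ)⁻¹ • Matrix.vecMulVec A.diag A.diag).PosSemidef := by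
  have hnpos : (0:ℝ) < n := by exact_mod_cast hn
  set B := CFC.sqrt A with hBdef
  have hBH : B.IsHermitian := (CFC.sqrt_nonneg A).posSemidef.1
  have hBsym : ∀ a b, B a b = B b a := by
    intro a b
    have := congrFun (congrFun hBH a) b
    simpa using this.symm
  have hBA : ∀ i j, A i j = ∑ k, B k i * B k j := by
    intro i j
    conv_lhs => rw [← CFC.sqrt_mul_sqrt_self A hA.nonneg]
    rw [mul_apply]
    exact Finset.sum_congr rfl fun k _ => by rw [← hBdef, hBsym i k]
  have hAsym : ∀ i j, A i j = A j i := by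
    intro i j
    have := congrFun (congrFun hA.1 i) j
    simpa using this.symm
  refine Matrix.PosSemidef.of_dotProduct_mulVec_nonneg ?_ ?_
  · show _ᴴ = _
    ext i j
    simp only [conjTranspose_apply, Matrix.sub_apply, Matrix.smul_apply, hadamard_apply, vecMulVec_apply,
      diag_apply, smul_eq_mul, star_trivial]
    rw [hAsym j i]; ring
  · intro x
    simp only [star_trivial]
    set M : Matrix (Fin n) (Fin n) ℝ := fun k l => ∑ i, x i * B k i * B l i with hM
    have key : x ⬝ᵥ (A.hadamard A - (n : ℝ)⁻¹ • Matrix.vecMulVec A.diag A.diag) *ᵥ x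
        = (∑ k, ∑ l, (M k l)^2) - (n:ℝ)⁻¹ * (∑ k, M k k)^2 := by
      have swap4 : ∀ (f : Fin n → Fin n → Fin n → Fin n → ℝ),
          (∑ k, ∑ l, ∑ i, ∑ j, f k l i j) = ∑ i, ∑ j, ∑ k, ∑ l, f k l i j := by
        intro f
        calc ∑ k, ∑ l, ∑ i, ∑ j, f k l i j
            = ∑ k, ∑ i, ∑ l, ∑ j, f k l i j :=
              Finset.sum_congr rfl fun k _ => Finset.sum_comm
          _ = ∑ i, ∑ k, ∑ l, ∑ j, f k l i j := Finset.sum_comm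
          _ = ∑ i, ∑ k, ∑ j, ∑ l, f k l i j :=
              Finset.sum_congr rfl fun i _ => Finset.sum_congr rfl fun k _ => Finset.sum_comm
          _ = ∑ i, ∑ j, ∑ k, ∑ l, f k l i j :=
              Finset.sum_congr rfl fun i _ => Finset.sum_comm
      have hS : ∑ k, ∑ l, (M k l)^2 = ∑ i, ∑ j, x i * x j * (A i j)^2 := by
        have e1 : ∀ k l, (M k l)^2
            = ∑ i, ∑ j, (x i * B k i * B l i) * (x j * B k j * B l j) := by
          intro k l
          show (∑ i, x i * B k i * B l i)^2 = _
          rw [sq, Finset.sum_mul_sum]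
        have e2 : ∀ i j, x i * x j * (A i j)^2
            = ∑ k, ∑ l, (x i * B k i * B l i) * (x j * B k j * B l j) := by
          intro i j
          rw [hBA, sq, Finset.sum_mul_sum, Finset.mul_sum]
          refine Finset.sum_congr rfl fun k _ => ?_
          rw [Finset.mul_sum]
          exact Finset.sum_congr rfl fun l _ => by ring
        simp only [e1, e2]
        exact swap4 _
      have hT : ∑ k, M k k = ∑ i, x i * A i i := by
        rw [Finset.sum_comm]
        refine Finset.sum_congr rfl fun i _ => ?_
        rw [hBA, Finset.mul_sum]
        exact Finset.sum_congr rfl fun k _ => by ring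
      rw [hS, hT]
      simp only [dotProduct, mulVec, Matrix.sub_apply, Matrix.smul_apply, hadamard_apply, vecMulVec_apply,
        diag_apply, smul_eq_mul, dotProduct]
      rw [sq, Finset.sum_mul_sum]
      simp only [Finset.mul_sum, ← Finset.sum_sub_distrib]
      refine Finset.sum_congr rfl fun i _ => Finset.sum_congr rfl fun j _ => by ring
    rw [key]
    have cs : (∑ k, M k k)^2 ≤ n * ∑ k, (M k k)^2 := by
      simpa using sq_sum_le_card_mul_sum_sq (s := Finset.univ) (f := fun k => M k k)
    have h2 : ∑ k, (M k k)^2 ≤ ∑ k, ∑ l, (M k l)^2 := by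
      refine Finset.sum_le_sum fun k _ => Finset.single_le_sum (f := fun l => (M k l)^2)
        (fun l _ => sq_nonneg _) (Finset.mem_univ k)
    have : (n:ℝ)⁻¹ * (∑ k, M k k)^2 ≤ ∑ k, ∑ l, (M k l)^2 := by
      calc (n:ℝ)⁻¹ * (∑ k, M k k)^2 ≤ (n:ℝ)⁻¹ * (n * ∑ k, (M k k)^2) := by
            exact mul_le_mul_of_nonneg_left cs (by positivity)
        _ = ∑ k, (M k k)^2 := by field_simp
        _ ≤ _ := h2
    linarith
end

section
/- Let n ≥ 1 and let Φ be a random n×n real matrix on a probability space such that Φ(ω) is positive semidefinite for (almost) every ω and each entry of Φ is square-integrable. Then E[Φ∘Φ] − (1/n)·diag(E[Φ])diag(E[Φ])ᵀ is positive semidefinite, i.e., E[Φ∘Φ] ≥ diag(E[Φ])diag(E[Φ])ᵀ/n in the Loewner order, where expectations of matrices and vectors are taken entrywise. -/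
open Matrix MeasureTheory

lemma key_ptwise {n : ℕ} {A : Matrix (Fin n) (Fin n) ℝ} (hA : A.PosSemidef)
    (x : Fin n → ℝ) :
    (∑ i, x i * A i i) ^ 2 ≤ (n : ℝ) * ∑ i, ∑ j, x i * x j * A i j ^ 2 := by
  classical
  set S := (open scoped MatrixOrder in CFC.sqrt A) with hS_def
  have hS_sq : S * S = A := by
    open scoped MatrixOrder in exact CFC.sqrt_mul_sqrt_self A hA.nonneg
  have hS_symm : Sᵀ = S := by
    rw [← conjTranspose_eq_transpose_of_trivial]
    exact (open scoped MatrixOrder in (CFC.sqrt_nonneg A).posSemidef.1)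
  have hA_symm : Aᵀ = A := by
    rw [← conjTranspose_eq_transpose_of_trivial]; exact hA.1
  have hAji : ∀ i j : Fin n, A j i = A i j := fun i j => by
    have := congrFun (congrFun hA_symm j) i
    simpa [Matrix.transpose_apply] using this.symm
  set D : Matrix (Fin n) (Fin n) ℝ := Matrix.diagonal x with hD
  set C : Matrix (Fin n) (Fin n) ℝ := S * D * S with hC
  have hC_symm : ∀ i j, C j i = C i j := by
    intro i j
    have h : Cᵀ = C := by
      rw [hC, transpose_mul, transpose_mul, hS_symm, Matrix.diagonal_transpose,
        Matrix.mul_assoc]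
    have := congrFun (congrFun h i) j
    simpa [Matrix.transpose_apply] using this
  have trace_mul : ∀ (M N : Matrix (Fin n) (Fin n) ℝ),
      Matrix.trace (M * N) = ∑ i, ∑ j, M i j * N j i := by
    intro M N
    simp [Matrix.trace, Matrix.diag, Matrix.mul_apply]
  -- trace C = ∑ x i * A i i
  have htr : Matrix.trace C = ∑ i, x i * A i i := by
    rw [hC, Matrix.trace_mul_comm, ← Matrix.mul_assoc, hS_sq, trace_mul]
    refine Finset.sum_congr rfl fun i _ => ?_
    rw [Finset.sum_eq_single i (fun j _ hj => by simp [hD, Matrix.diagonal_apply_ne x hj])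
      (by simp)]
    simp [hD, mul_comm]
  -- trace (C * C) identities
  have hCC : Matrix.trace (C * C) = ∑ i, ∑ j, x i * x j * A i j ^ 2 := by
    have h1 : C * C = S * (D * A * D * S) := by
      rw [hC]
      have h2 : S * D * S * (S * D * S) = S * (D * (S * S) * D * S) := by
        simp only [Matrix.mul_assoc]
      rw [h2, hS_sq]
    rw [h1, Matrix.trace_mul_comm, Matrix.mul_assoc (D * A * D) S S, hS_sq,
      show D * A * D * A = (D * A) * (D * A) by simp only [Matrix.mul_assoc],
      trace_mul]
    refine Finset.sum_congr rfl fun i _ => Finset.sum_congr rfl fun j _ => ?_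
    rw [show (D * A) i j = x i * A i j by rw [hD, Matrix.diagonal_mul],
      show (D * A) j i = x j * A j i by rw [hD, Matrix.diagonal_mul], hAji i j]
    ring
  have hdiag_sq : Matrix.trace (C * C) = ∑ i, ∑ j, C i j ^ 2 := by
    rw [trace_mul]
    refine Finset.sum_congr rfl fun i _ => Finset.sum_congr rfl fun j _ => ?_
    rw [hC_symm i j, sq]
  -- Cauchy-Schwarz
  have hcs : (Matrix.trace C) ^ 2 ≤ (n : ℝ) * ∑ i, C i i ^ 2 := by
    have := Finset.sum_mul_sq_le_sq_mul_sq Finset.univ (fun i : Fin n => C i i)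
      (fun _ => (1 : ℝ))
    simpa [Matrix.trace, Matrix.diag, mul_comm] using this
  have hsum : ∑ i, C i i ^ 2 ≤ ∑ i, ∑ j, C i j ^ 2 := by
    refine Finset.sum_le_sum fun i _ => ?_
    exact Finset.single_le_sum (fun j _ => sq_nonneg (C i j)) (Finset.mem_univ i)
  calc (∑ i, x i * A i i) ^ 2 = (Matrix.trace C) ^ 2 := by rw [htr]
    _ ≤ (n : ℝ) * ∑ i, C i i ^ 2 := hcs
    _ ≤ (n : ℝ) * ∑ i, ∑ j, C i j ^ 2 :=
        mul_le_mul_of_nonneg_left hsum (Nat.cast_nonneg n)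
    _ = (n : ℝ) * ∑ i, ∑ j, x i * x j * A i j ^ 2 := by rw [← hdiag_sq, hCC]

/-- Let `Φ` be a random `n × n` real matrix (`n ≥ 1`) that is almost surely positive
semidefinite, with square-integrable entries. Then
`E[Φ∘Φ] ≥ diag(E[Φ]) diag(E[Φ])ᵀ / n` in the Loewner order, all expectations being
taken entrywise. -/
theorem expectation_hadamard_sq_ge_diag {n : ℕ} (hn : 1 ≤ n) {Ω : Type*}
    [MeasurableSpace Ω] (μ : Measure Ω) [IsProbabilityMeasure μ]
    (Φ : Ω → Matrix (Fin n) (Fin n) ℝ)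
    (hmeas : ∀ i j, Measurable fun ω => Φ ω i j)
    (hint : ∀ i j, MemLp (fun ω => Φ ω i j) 2 μ)
    (hpsd : ∀ᵐ ω ∂μ, (Φ ω).PosSemidef) :
    ((Matrix.of fun i j => ∫ ω, Φ ω i j * Φ ω i j ∂μ) -
      (n : ℝ)⁻¹ • Matrix.vecMulVec (fun i => ∫ ω, Φ ω i i ∂μ)
        (fun j => ∫ ω, Φ ω j j ∂μ)).PosSemidef := by
  classical
  have hΦsymm : ∀ᵐ ω ∂μ, ∀ i j, Φ ω i j = Φ ω j i := by
    filter_upwards [hpsd] with ω h i j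
    have := congrFun (congrFun h.1 j) i
    simpa using this
  have hint2 : ∀ i j, Integrable (fun ω => Φ ω i j * Φ ω i j) μ := fun i j => by
    simpa [pow_two] using (hint i j).integrable_sq
  set v : Fin n → ℝ := fun i => ∫ ω, Φ ω i i ∂μ with hv
  refine Matrix.PosSemidef.of_dotProduct_mulVec_nonneg ?_ ?_
  · -- Hermitian
    rw [Matrix.IsHermitian, conjTranspose_eq_transpose_of_trivial]
    ext i j
    have hij : (∫ ω, Φ ω j i * Φ ω j i ∂μ) = ∫ ω, Φ ω i j * Φ ω i j ∂μ := by
      refine integral_congr_ae ?_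
      filter_upwards [hΦsymm] with ω h
      rw [h j i]
    simp only [Matrix.transpose_apply, Matrix.sub_apply, Matrix.of_apply,
      Matrix.smul_apply, Matrix.vecMulVec_apply, smul_eq_mul]
    rw [hij]
    ring
  · intro x
    simp only [star_trivial]
    -- expand quadratic form
    have hexp : x ⬝ᵥ ((Matrix.of fun i j => ∫ ω, Φ ω i j * Φ ω i j ∂μ) -
        (n : ℝ)⁻¹ • Matrix.vecMulVec v v) *ᵥ x
        = (∑ i, ∑ j, x i * x j * ∫ ω, Φ ω i j * Φ ω i j ∂μ)
          - (n : ℝ)⁻¹ * ((∑ i, x i * v i) * (∑ j, x j * v j)) := by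
      rw [Matrix.sub_mulVec, dotProduct_sub, Matrix.smul_mulVec, dotProduct_smul,
        smul_eq_mul]
      congr 1
      · simp only [dotProduct, Matrix.mulVec, Matrix.of_apply, dotProduct,
          Finset.mul_sum]
        exact Finset.sum_congr rfl fun i _ => Finset.sum_congr rfl fun j _ => by ring
      · congr 1
        rw [Finset.sum_mul_sum]
        simp only [dotProduct, Matrix.mulVec, Matrix.vecMulVec_apply, dotProduct,
          Finset.mul_sum]
        exact Finset.sum_congr rfl fun i _ => Finset.sum_congr rfl fun j _ => by ring
    rw [hexp]
    -- L : linear statistic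
    set L : Ω → ℝ := fun ω => ∑ i, x i * Φ ω i i with hL
    have hL2 : MemLp L 2 μ := by
      refine memLp_finset_sum Finset.univ fun i _ => ?_
      exact (hint i i).const_mul (x i)
    have hvL : ∑ i, x i * v i = ∫ ω, L ω ∂μ := by
      rw [hL, hv]
      rw [integral_finset_sum Finset.univ
        (fun i _ => ((hint i i).integrable one_le_two).const_mul (x i))]
      exact Finset.sum_congr rfl fun i _ => (integral_const_mul (x i) _).symm
    have hjensen : (∫ ω, L ω ∂μ) ^ 2 ≤ ∫ ω, (L ω) ^ 2 ∂μ := by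
      have h1 := ProbabilityTheory.variance_nonneg L μ
      rw [ProbabilityTheory.variance_eq_sub hL2] at h1
      have : (∫ ω, (L ^ 2) ω ∂μ) = ∫ ω, (L ω) ^ 2 ∂μ := rfl
      simp only [Pi.pow_apply] at h1
      linarith
    -- pointwise key inequality
    set G : Ω → ℝ := fun ω => ∑ i, ∑ j, x i * x j * (Φ ω i j) ^ 2 with hG
    have hGint : Integrable G μ := by
      refine integrable_finset_sum Finset.univ fun i _ => ?_
      refine integrable_finset_sum Finset.univ fun j _ => ?_
      exact ((hint i j).integrable_sq.const_mul (x i * x j)).congr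
        (Filter.EventuallyEq.of_eq (by funext ω; ring))
    have hptw : ∀ᵐ ω ∂μ, (L ω) ^ 2 ≤ (n : ℝ) * G ω := by
      filter_upwards [hpsd] with ω h
      exact key_ptwise h x
    have hLG : ∫ ω, (L ω) ^ 2 ∂μ ≤ (n : ℝ) * ∫ ω, G ω ∂μ := by
      rw [← integral_const_mul]
      exact integral_mono_ae hL2.integrable_sq (hGint.const_mul _) hptw
    -- the integral of G equals the double sum of integrals
    have hGsum : ∑ i, ∑ j, x i * x j * ∫ ω, Φ ω i j * Φ ω i j ∂μ = ∫ ω, G ω ∂μ := by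
      rw [hG, integral_finset_sum Finset.univ (fun i _ => integrable_finset_sum Finset.univ
        (fun j _ => ((hint i j).integrable_sq.const_mul (x i * x j)).congr
          (Filter.EventuallyEq.of_eq (by funext ω; ring))))]
      refine Finset.sum_congr rfl fun i _ => ?_
      rw [integral_finset_sum Finset.univ
        (fun j _ => ((hint i j).integrable_sq.const_mul (x i * x j)).congr
          (Filter.EventuallyEq.of_eq (by funext ω; ring)))]
      refine Finset.sum_congr rfl fun j _ => ?_
      rw [← integral_const_mul]
      exact integral_congr_ae (Filter.EventuallyEq.of_eq (by funext ω; ring))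
    have hn0 : (n : ℝ) ≠ 0 := by positivity
    have hfinal : (n : ℝ)⁻¹ * ((∑ i, x i * v i) * (∑ j, x j * v j))
        ≤ ∑ i, ∑ j, x i * x j * ∫ ω, Φ ω i j * Φ ω i j ∂μ := by
      rw [hGsum, hvL, ← sq]
      calc (n : ℝ)⁻¹ * (∫ ω, L ω ∂μ) ^ 2 ≤ (n : ℝ)⁻¹ * ∫ ω, (L ω) ^ 2 ∂μ := by
            exact mul_le_mul_of_nonneg_left hjensen (by positivity)
        _ ≤ (n : ℝ)⁻¹ * ((n : ℝ) * ∫ ω, G ω ∂μ) :=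
            mul_le_mul_of_nonneg_left hLG (by positivity)
        _ = ∫ ω, G ω ∂μ := by field_simp
    linarith
end
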